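/- Let n_c > 0 be a constant and let f : ℝ³ → (0,∞) be continuous. Suppose that: (i) for all p, p_*, p', p'_* ∈ ℝ³ with p + p_* = p' + p'_* and |p|² + |p_*|² = |p'|² + |p'_*|², one has (f(p')/(1+f(p'))) · (f(p'_*)/(1+f(p'_*))) = (f(p)/(1+f(p))) · (f(p_*)/(1+f(p_*))); and (ii) for all p₁, p₂, p₃ ∈ ℝ³ with p₁ = p₂ + p₃ and |p₁|² = |p₂|² + |p₃|² + n_c, one has f(p₁)/(1+f(p₁)) = (f(p₂)/(1+f(p₂))) · (f(p₃)/(1+f(p₃))). Then there exist α > 0 and β ∈ ℝ³ such that f(p) = 1/(exp(α(|p|² + n_c) + β·p) − 1) for all p ∈ ℝ³. -/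

import Mathlib

open MeasureTheory Metric Set

noncomputable section
local notation "E3" => EuclideanSpace ℝ (Fin 3)

lemma lin1 (ψ : ℝ → ℝ) (hc : Continuous ψ) (hadd : ∀ s t, ψ (s + t) = ψ s + ψ t) :
    ∀ t : ℝ, ψ t = t * ψ 1 := by
  intro t
  have := map_real_smul (AddMonoidHom.mk' ψ hadd) hc t 1
  simpa [smul_eq_mul] using this

lemma exists_orth (u v : E3) (t : ℝ) (ht : 0 ≤ t) :
    ∃ w : E3, (inner ℝ u w : ℝ) = 0 ∧ (inner ℝ v w : ℝ) = 0 ∧ ‖w‖ = t := by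
  obtain ⟨w0, hw0u, hw0v, hw0⟩ : ∃ w0 : E3, (inner ℝ u w0 : ℝ) = 0 ∧ (inner ℝ v w0 : ℝ) = 0 ∧ w0 ≠ 0 := by
    set T : E3 →ₗ[ℝ] ℝ × ℝ := ((innerSL ℝ u).prod (innerSL ℝ v)).toLinearMap
    have hker : LinearMap.ker T ≠ ⊥ := by
      intro hbot
      have hinj : Function.Injective T := LinearMap.ker_eq_bot.mp hbot
      have h3 : Module.finrank ℝ E3 ≤ Module.finrank ℝ (ℝ × ℝ) :=
        LinearMap.finrank_le_finrank_of_injective hinj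
      simp [finrank_euclideanSpace] at h3
    obtain ⟨w0, hw0mem, hw0ne⟩ := Submodule.exists_mem_ne_zero_of_ne_bot hker
    refine ⟨w0, ?_, ?_, hw0ne⟩ <;>
    · have hk := LinearMap.mem_ker.mp hw0mem
      have h1 := congrArg Prod.fst hk
      have h2 := congrArg Prod.snd hk
      simp_all [T]
  refine ⟨(t / ‖w0‖) • w0, ?_, ?_, ?_⟩
  · rw [real_inner_smul_right, hw0u, mul_zero]
  · rw [real_inner_smul_right, hw0v, mul_zero]
  · have hne : ‖w0‖ ≠ 0 := norm_ne_zero_iff.mpr hw0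
    rw [norm_smul, Real.norm_eq_abs, abs_of_nonneg (div_nonneg ht (norm_nonneg w0)), div_mul_cancel₀ _ hne]

lemma orthAdd_structure (h : EuclideanSpace ℝ (Fin 3) → ℝ) (hc : Continuous h)
    (hadd : ∀ u v : E3, (inner ℝ u v : ℝ) = 0 → h (u + v) = h u + h v) :
    ∃ (c : ℝ) (b : E3), ∀ p, h p = c * ‖p‖ ^ 2 + (inner ℝ b p : ℝ) := by
  have h0 : h 0 = 0 := by
    have := hadd 0 0 (by simp)
    simp at this
    linarith
  set e : E3 → ℝ := fun p => (h p + h (-p)) / 2 with he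
  set o : E3 → ℝ := fun p => (h p - h (-p)) / 2 with ho
  have hadd' : ∀ u v : E3, (inner ℝ u v : ℝ) = 0 → h (-(u + v)) = h (-u) + h (-v) := by
    intro u v huv
    have : (inner ℝ (-u) (-v) : ℝ) = 0 := by rwa [inner_neg_neg]
    rw [show -(u + v) = -u + -v by module]
    exact hadd (-u) (-v) this
  have eadd : ∀ u v : E3, (inner ℝ u v : ℝ) = 0 → e (u + v) = e u + e v := by
    intro u v huv
    simp only [he]
    rw [hadd u v huv, hadd' u v huv]; ring
  have oadd0 : ∀ u v : E3, (inner ℝ u v : ℝ) = 0 → o (u + v) = o u + o v := by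
    intro u v huv
    simp only [ho]
    rw [hadd u v huv, hadd' u v huv]; ring
  have eneg : ∀ p, e (-p) = e p := by intro p; simp only [he, neg_neg]; ring
  have oneg : ∀ p, o (-p) = - o p := by intro p; simp only [ho, neg_neg]; ring
  -- e is constant on spheres
  have econst : ∀ p q : E3, ‖p‖ = ‖q‖ → e p = e q := by
    intro p q hpq
    set s : E3 := (1/2 : ℝ) • (p + q) with hs
    set d : E3 := (1/2 : ℝ) • (p - q) with hd
    have hsd : (inner ℝ s d : ℝ) = 0 := by
      rw [hs, hd, real_inner_smul_left, real_inner_smul_right]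
      have : (inner ℝ (p + q) (p - q) : ℝ) = ‖p‖ ^ 2 - ‖q‖ ^ 2 := by
        rw [inner_sub_right, inner_add_left, inner_add_left,
          real_inner_self_eq_norm_sq, real_inner_self_eq_norm_sq, real_inner_comm q p]
        ring
      rw [this, hpq]; ring
    have hp : s + d = p := by rw [hs, hd]; module
    have hq : s + (-d) = q := by rw [hs, hd]; module
    have h1 : e p = e s + e d := by rw [← hp]; exact eadd s d hsd
    have h2 : e q = e s + e d := by
      rw [← hq, eadd s (-d) (by rwa [inner_neg_right, neg_eq_zero]), eneg]
    rw [h1, h2]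
  -- o doubles
  have odouble : ∀ u : E3, o (u + u) = 2 * o u := by
    intro u
    obtain ⟨w, hwu, -, hwn⟩ := exists_orth u u ‖u‖ (norm_nonneg u)
    have hw2 : (inner ℝ w w : ℝ) = (inner ℝ u u : ℝ) := by
      rw [real_inner_self_eq_norm_sq, real_inner_self_eq_norm_sq, hwn]
    have horth : (inner ℝ (u + w) (u + (-w)) : ℝ) = 0 := by
      rw [inner_add_left, inner_add_right, inner_add_right, inner_neg_right,
        inner_neg_right, hw2, real_inner_comm u w, hwu]
      ring
    have hsum : (u + w) + (u + (-w)) = u + u := by module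
    have := oadd0 (u + w) (u + (-w)) horth
    rw [hsum] at this
    rw [this, oadd0 u w hwu, oadd0 u (-w) (by rwa [inner_neg_right, neg_eq_zero]), oneg]
    ring
  -- o is additive
  have oadd : ∀ u v : E3, o (u + v) = o u + o v := by
    intro u v
    rcases le_or_gt 0 (inner ℝ u v : ℝ) with hle | hlt
    · obtain ⟨w, hwu, hwv, hwn⟩ := exists_orth u v (Real.sqrt (inner ℝ u v)) (Real.sqrt_nonneg _)
      have hw2 : (inner ℝ w w : ℝ) = (inner ℝ u v : ℝ) := by
        rw [real_inner_self_eq_norm_sq, hwn, sq, Real.mul_self_sqrt hle]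
      have horth : (inner ℝ (u + w) (v + (-w)) : ℝ) = 0 := by
        rw [inner_add_left, inner_add_right, inner_add_right, inner_neg_right,
          inner_neg_right, hw2, hwu, real_inner_comm v w, hwv]
        ring
      have hsum : (u + w) + (v + (-w)) = u + v := by module
      have := oadd0 (u + w) (v + (-w)) horth
      rw [hsum] at this
      rw [this, oadd0 u w hwu, oadd0 v (-w) (by rwa [inner_neg_right, neg_eq_zero]), oneg]
      ring
    · obtain ⟨w, hwu, hwv, hwn⟩ := exists_orth u v (Real.sqrt (-(4 * (inner ℝ u v : ℝ))))
        (Real.sqrt_nonneg _)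
      have hw2 : (inner ℝ w w : ℝ) = -(4 * (inner ℝ u v : ℝ)) := by
        rw [real_inner_self_eq_norm_sq, hwn, sq, Real.mul_self_sqrt (by nlinarith)]
      set z : E3 := (1/2 : ℝ) • w with hz
      have hzz : z + z = w := by rw [hz]; module
      have huz : (inner ℝ u z : ℝ) = 0 := by rw [hz, real_inner_smul_right, hwu, mul_zero]
      have hvz : (inner ℝ v z : ℝ) = 0 := by rw [hz, real_inner_smul_right, hwv, mul_zero]
      have hzz2 : (inner ℝ z z : ℝ) = -(inner ℝ u v : ℝ) := by
        rw [hz, real_inner_smul_left, real_inner_smul_right, hw2]; ring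
      have key1 : o ((u + v) + w) = o (u + v) + o w := by
        refine oadd0 (u + v) w ?_
        rw [inner_add_left, hwu, hwv, add_zero]
      have horth : (inner ℝ (u + z) (v + z) : ℝ) = 0 := by
        rw [inner_add_left, inner_add_right, inner_add_right, hzz2,
          huz, real_inner_comm v z, hvz]
        ring
      have hsum : (u + z) + (v + z) = (u + v) + w := by rw [← hzz]; module
      have key2 := oadd0 (u + z) (v + z) horth
      rw [hsum] at key2
      have key3 : o w = 2 * o z := by rw [← hzz]; exact odouble z
      rw [key1, oadd0 u z huz, oadd0 v z hvz, key3] at key2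
      linarith
  -- continuity of e and o
  have econt : Continuous e := by
    simp only [he]; fun_prop
  have ocont : Continuous o := by
    simp only [ho]; fun_prop
  -- odd part: fully linear
  have olin : ∀ (r : ℝ) (x : E3), o (r • x) = r * o x := by
    intro r x
    have := map_real_smul (AddMonoidHom.mk' o oadd) ocont r x
    simpa [smul_eq_mul] using this
  set b : E3 := (WithLp.equiv 2 (Fin 3 → ℝ)).symm
    (fun i => o (EuclideanSpace.single i 1)) with hb
  have hbi : ∀ i, b i = o (EuclideanSpace.single i 1) := fun i => rfl
  have hdecomp : ∀ p : E3, p = ∑ i : Fin 3, p i • EuclideanSpace.single i (1 : ℝ) := by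
    intro p
    ext j
    have : (∑ i : Fin 3, p i • EuclideanSpace.single i (1 : ℝ)) j
        = ∑ i : Fin 3, (p i • EuclideanSpace.single i (1 : ℝ)) j := by
      induction (Finset.univ : Finset (Fin 3)) using Finset.induction_on with
      | empty => rfl
      | insert _ _ hx ih => rw [Finset.sum_insert hx, Finset.sum_insert hx, ← ih]; rfl
    rw [this]
    simp [EuclideanSpace.single_apply]
  have orep : ∀ p : E3, o p = (inner ℝ b p : ℝ) := by
    intro p
    have h1 : o p = ∑ i : Fin 3, o (p i • EuclideanSpace.single i (1 : ℝ)) := by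
      conv_lhs => rw [hdecomp p]
      exact map_sum (AddMonoidHom.mk' o oadd) _ _
    rw [h1, PiLp.inner_apply]
    refine Finset.sum_congr rfl fun i _ => ?_
    rw [olin, hbi]
    simp [mul_comm]
  -- even part
  have e0 : e 0 = 0 := by simp [he, h0]
  have hsingle_norm : ∀ (i : Fin 3) (r : ℝ),
      ‖(r • EuclideanSpace.single i (1 : ℝ) : E3)‖ = |r| := by
    intro i r
    rw [norm_smul, EuclideanSpace.norm_single, norm_one, mul_one, Real.norm_eq_abs]
  set φ : ℝ → ℝ := fun t => e (Real.sqrt t • EuclideanSpace.single (0 : Fin 3) (1 : ℝ)) with hφ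
  have hφ0 : ∀ t ≤ (0 : ℝ), φ t = 0 := by
    intro t ht
    simp only [hφ]
    rw [Real.sqrt_eq_zero'.mpr ht, zero_smul]
    exact e0
  have hφadd : ∀ s t : ℝ, 0 ≤ s → 0 ≤ t → φ (s + t) = φ s + φ t := by
    intro s t hs ht
    set u : E3 := Real.sqrt s • EuclideanSpace.single (0 : Fin 3) (1 : ℝ) with hu
    set v : E3 := Real.sqrt t • EuclideanSpace.single (1 : Fin 3) (1 : ℝ) with hv
    have huv : (inner ℝ u v : ℝ) = 0 := by
      rw [hu, hv, real_inner_smul_left, real_inner_smul_right]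
      have : (inner ℝ (EuclideanSpace.single (0 : Fin 3) (1 : ℝ))
          (EuclideanSpace.single (1 : Fin 3) (1 : ℝ)) : ℝ) = 0 := by
        rw [PiLp.inner_apply]
        simp [EuclideanSpace.single_apply]
      rw [this]; ring
    have hnu : ‖u‖ = Real.sqrt s := by rw [hu, hsingle_norm, abs_of_nonneg (Real.sqrt_nonneg _)]
    have hnv : ‖v‖ = Real.sqrt t := by rw [hv, hsingle_norm, abs_of_nonneg (Real.sqrt_nonneg _)]
    have hsum2 : ‖u + v‖ ^ 2 = s + t := by
      rw [norm_add_sq_real, huv, hnu, hnv, Real.sq_sqrt hs, Real.sq_sqrt ht]; ring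
    have hnorm : ‖(Real.sqrt (s + t) • EuclideanSpace.single (0 : Fin 3) (1 : ℝ) : E3)‖
        = ‖u + v‖ := by
      rw [hsingle_norm, abs_of_nonneg (Real.sqrt_nonneg _)]
      rw [show Real.sqrt (s + t) = Real.sqrt (‖u + v‖ ^ 2) by rw [hsum2]]
      rw [Real.sqrt_sq (norm_nonneg _)]
    have h1 : φ (s + t) = e (u + v) := econst _ _ hnorm
    have h2 : φ t = e v := econst _ _ (by rw [hsingle_norm, hnv, abs_of_nonneg (Real.sqrt_nonneg _)])
    rw [h1, eadd u v huv, ← h2]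
  have hφcont : Continuous φ := by
    simp only [hφ]
    exact econt.comp ((Real.continuous_sqrt).smul continuous_const)
  set Φ : ℝ → ℝ := fun t => φ t - φ (-t) with hΦ
  have keyA : ∀ s t : ℝ, 0 ≤ s → Φ (s + t) = Φ s + Φ t := by
    intro s t hs
    rcases le_or_gt 0 t with ht | ht
    · simp only [hΦ]
      rw [hφ0 (-(s + t)) (by linarith), hφ0 (-s) (by linarith), hφ0 (-t) (by linarith),
        hφadd s t hs ht]
      ring
    rcases le_or_gt 0 (s + t) with hst | hst
    · have h1 : φ s = φ (s + t) + φ (-t) := by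
        have := hφadd (s + t) (-t) hst (by linarith)
        rw [show s + t + -t = s by ring] at this
        exact this
      simp only [hΦ]
      rw [hφ0 (-(s + t)) (by linarith), hφ0 (-s) (by linarith), hφ0 t ht.le, h1]
      ring
    · have h1 : φ (-t) = φ (-(s + t)) + φ s := by
        have := hφadd (-(s + t)) s (by linarith) hs
        rw [show -(s + t) + s = -t by ring] at this
        exact this
      simp only [hΦ]
      rw [hφ0 (s + t) hst.le, hφ0 (-s) (by linarith), hφ0 t ht.le, h1]
      ring
  have Φadd : ∀ s t : ℝ, Φ (s + t) = Φ s + Φ t := by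
    intro s t
    rcases le_or_gt 0 s with hs | hs
    · exact keyA s t hs
    rcases le_or_gt 0 t with ht | ht
    · rw [add_comm, keyA t s ht, add_comm]
    · have h1 := hφadd (-s) (-t) (by linarith) (by linarith)
      simp only [hΦ]
      rw [hφ0 (s + t) (by linarith), hφ0 s hs.le, hφ0 t ht.le,
        show -(s + t) = -s + -t by ring, h1]
      ring
  have Φcont : Continuous Φ := by
    simp only [hΦ]
    exact hφcont.sub (hφcont.comp continuous_neg)
  have Φlin := lin1 Φ Φcont Φadd
  have hΦ1 : Φ 1 = φ 1 := by
    simp only [hΦ]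
    rw [hφ0 (-1) (by norm_num)]
    ring
  have hφlin : ∀ t : ℝ, 0 ≤ t → φ t = t * φ 1 := by
    intro t ht
    have h1 : φ t = Φ t := by
      simp only [hΦ]
      rw [hφ0 (-t) (by linarith)]
      ring
    rw [h1, Φlin t, hΦ1]
  have erep : ∀ p : E3, e p = φ 1 * ‖p‖ ^ 2 := by
    intro p
    have h1 : e p = φ (‖p‖ ^ 2) := by
      refine econst _ _ ?_
      rw [hsingle_norm, Real.sqrt_sq_eq_abs, abs_abs, abs_of_nonneg (norm_nonneg p)]
    rw [h1, hφlin _ (sq_nonneg _)]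
    ring
  refine ⟨φ 1, b, fun p => ?_⟩
  have hsplit : h p = e p + o p := by simp only [he, ho]; ring
  rw [hsplit, erep p, orep p]

/-- the equilibrium relations for the collision operators `C₂₂` (between
excitations) and `C₁₂` (between excitations and a condensate of density `n_c`) force a
continuous positive density to be the Planckian `1/(exp(α(|p|² + n_c) + β·p) − 1)`. -/
theorem planckian_of_condensate_equilibrium
    (nc : ℝ) (hnc : 0 < nc)
    (f : EuclideanSpace ℝ (Fin 3) → ℝ)
    (hfpos : ∀ p, 0 < f p)
    (hfcont : Continuous f)
    (hC22 : ∀ p ps p' ps' : EuclideanSpace ℝ (Fin 3),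
      p + ps = p' + ps' → ‖p‖ ^ 2 + ‖ps‖ ^ 2 = ‖p'‖ ^ 2 + ‖ps'‖ ^ 2 →
      (f p' / (1 + f p')) * (f ps' / (1 + f ps'))
        = (f p / (1 + f p)) * (f ps / (1 + f ps)))
    (hC12 : ∀ p1 p2 p3 : EuclideanSpace ℝ (Fin 3),
      p1 = p2 + p3 → ‖p1‖ ^ 2 = ‖p2‖ ^ 2 + ‖p3‖ ^ 2 + nc →
      f p1 / (1 + f p1) = (f p2 / (1 + f p2)) * (f p3 / (1 + f p3))) :
    ∃ (α : ℝ) (β : EuclideanSpace ℝ (Fin 3)), 0 < α ∧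
      ∀ p, f p = 1 / (Real.exp (α * (‖p‖ ^ 2 + nc) + inner ℝ β p) - 1) := by
  classical
  set F : EuclideanSpace ℝ (Fin 3) → ℝ := fun p => f p / (1 + f p) with hF
  have hFpos : ∀ p, 0 < F p := fun p => div_pos (hfpos p) (by linarith [hfpos p])
  have hFlt : ∀ p, F p < 1 := fun p =>
    (div_lt_one (by linarith [hfpos p])).mpr (by linarith [hfpos p])
  set g : EuclideanSpace ℝ (Fin 3) → ℝ := fun p => Real.log (F p) with hg
  have gcont : Continuous g := by
    apply Continuous.log
    · exact hfcont.div (continuous_const.add hfcont) (fun p => by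
        have := hfpos p; intro hcon; linarith)
    · exact fun p => (hFpos p).ne'
  have horth : ∀ u v : E3, (inner ℝ u v : ℝ) = 0 → g (u + v) + g 0 = g u + g v := by
    intro u v huv
    have hcol := hC22 (u + v) 0 u v (by rw [add_zero]) (by
      rw [norm_zero, norm_add_sq_real, huv]; ring)
    have hlog := congrArg Real.log hcol
    rw [Real.log_mul (hFpos u).ne' (hFpos v).ne',
      Real.log_mul (hFpos (u + v)).ne' (hFpos 0).ne'] at hlog
    simp only [hg]
    linarith [hlog]
  set h : EuclideanSpace ℝ (Fin 3) → ℝ := fun p => g p - g 0 with hh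
  have hcont : Continuous h := gcont.sub continuous_const
  have hadd : ∀ u v : E3, (inner ℝ u v : ℝ) = 0 → h (u + v) = h u + h v := by
    intro u v huv
    have := horth u v huv
    simp only [hh]
    linarith
  obtain ⟨c, b, hcb⟩ := orthAdd_structure h hcont hadd
  -- determine g 0 via C12
  set z : E3 := Real.sqrt (nc / 2) • EuclideanSpace.single (0 : Fin 3) (1 : ℝ) with hz
  have hz2 : ‖z‖ ^ 2 = nc / 2 := by
    rw [hz, norm_smul, EuclideanSpace.norm_single, norm_one, mul_one, Real.norm_eq_abs,
      sq_abs, Real.sq_sqrt (by linarith)]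
  have hzz : ‖z + z‖ ^ 2 = ‖z‖ ^ 2 + ‖z‖ ^ 2 + nc := by
    rw [norm_add_sq_real, real_inner_self_eq_norm_sq, hz2]; ring
  have hcol := hC12 (z + z) z z rfl hzz
  have hgz : g (z + z) = g z + g z := by
    have hlog := congrArg Real.log hcol
    rw [Real.log_mul (hFpos z).ne' (hFpos z).ne'] at hlog
    exact hlog
  have g0eq : g 0 = c * nc := by
    have e1 := hcb (z + z)
    have e2 := hcb z
    rw [inner_add_right] at e1
    have hzz' : ‖z + z‖ ^ 2 = 2 * nc := by rw [hzz, hz2]; ring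
    rw [hzz'] at e1
    rw [hz2] at e2
    simp only [hh] at e1 e2
    linarith [hgz, e1, e2]
  have g0neg : g 0 < 0 := Real.log_neg (hFpos 0) (hFlt 0)
  have hcneg : c < 0 := by nlinarith
  refine ⟨-c, -b, by linarith, fun p => ?_⟩
  have hgp : g p = c * (‖p‖ ^ 2 + nc) + (inner ℝ b p : ℝ) := by
    have := hcb p
    simp only [hh] at this
    linarith [g0eq]
  have hA : -c * (‖p‖ ^ 2 + nc) + (inner ℝ (-b) p : ℝ) = -g p := by
    rw [inner_neg_left]
    linarith [hgp]
  rw [hA]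
  have hfne : f p ≠ 0 := (hfpos p).ne'
  have hexp : Real.exp (-g p) = (1 + f p) / f p := by
    rw [Real.exp_neg, Real.exp_log (hFpos p)]
    rw [show F p = f p / (1 + f p) from rfl, inv_div]
  rw [hexp]
  have h1 : (1 + f p) / f p - 1 = 1 / f p := by rw [div_sub_one hfne, add_sub_cancel_right]
  rw [h1, one_div_one_div]
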